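/- Suppose D follows Data Model 1 and Assumption 3 holds: dim(Ṡ_i ∩ P_i) = 0 for every i, where P_i = ⊕_{k≠i} S_k with orthonormal basis matrix P_i. Let U⃗_i be an orthonormal basis for the column space of (I − P_iP_iᵀ)U_i. Fix a column d_i = S·α_i + U̇_{k_i}·β_i of D and suppose U⃗_{k_i}ᵀ U̇_{k_i} β_i ≠ 0; define d⃗_i = U⃗_{k_i}U⃗_{k_i}ᵀ d_i / ‖U⃗_{k_i}ᵀ U̇_{k_i} β_i‖₂². Then: (a) d⃗_iᵀ d_i = 1; (b) D_jᵀ d⃗_i = 0 for every j ≠ k_i; and (c) for every p ≥ 1, ‖D_{k_i}ᵀ d⃗_i‖_p^p ≤ Δ̇_max / ‖U⃗_{k_i}ᵀ U̇_{k_i} β_i‖₂^p. -/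

import Mathlib

open Matrix Finset MeasureTheory ProbabilityTheory

noncomputable section

namespace Paper

instance {m n α : Type*} [MeasurableSpace α] : MeasurableSpace (Matrix m n α) :=
  MeasurableSpace.pi

/-- Euclidean (`ℓ₂`) norm of a vector. -/
def enorm {ι : Type*} [Fintype ι] (v : ι → ℝ) : ℝ := Real.sqrt (∑ i, v i ^ 2)

/-- `ℓ_p` norm of a vector. -/
def pnorm {ι : Type*} [Fintype ι] (p : ℝ) (v : ι → ℝ) : ℝ := (∑ i, |v i| ^ p) ^ (1 / p)

/-- Spectral norm (largest singular value) of a real matrix. -/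
def spec {a b : Type*} [Fintype a] [Fintype b] (M : Matrix a b ℝ) : ℝ :=
  ⨆ v : { v : b → ℝ // enorm v = 1 }, enorm (M.mulVec v.1)

/-- Smallest singular value of a real matrix. -/
def smin {a b : Type*} [Fintype a] [Fintype b] (M : Matrix a b ℝ) : ℝ :=
  ⨅ v : { v : b → ℝ // enorm v = 1 }, enorm (M.mulVec v.1)

/-- Column space (span of the columns) of a matrix. -/
def colSpan {a b : Type*} (M : Matrix a b ℝ) : Submodule ℝ (a → ℝ) :=
  Submodule.span ℝ (Set.range Mᵀ)

/-- Requirement 1 with parameters `κ` and `p`; the columns of the data matrix are indexed by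
`Fin m × Fin n`, the first coordinate being the cluster index. -/
def Req1 {m n : ℕ} (A : Matrix (Fin m × Fin n) (Fin m × Fin n) ℝ) (κ p : ℝ) : Prop :=
  ∀ i : Fin m × Fin n,
    κ / ((m : ℝ) - 1) * ∑ j ∈ univ.filter (fun j : Fin m × Fin n => j.1 ≠ i.1), |A j i| ^ p
      < ∑ j ∈ univ.filter (fun j : Fin m × Fin n => j.1 = i.1), |A j i| ^ p

/-- Feasibility for the direction-search problem: `cᵢᵀ dᵢ = 1` for every column. -/
def Feasible {a ι : Type*} [Fintype a] [Fintype ι] (D C : Matrix a ι ℝ) : Prop :=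
  ∀ i, dotProduct (Cᵀ i) (Dᵀ i) = 1

/-- Optimal point of `min_C ∑ᵢ ‖Dᵀ cᵢ‖_p  s.t.  cᵢᵀ dᵢ = 1`. -/
def IsOptimal {a ι : Type*} [Fintype a] [Fintype ι] (p : ℝ) (D C : Matrix a ι ℝ) : Prop :=
  Feasible D C ∧ ∀ C' : Matrix a ι ℝ, Feasible D C' →
    ∑ i, pnorm p (Dᵀ.mulVec (Cᵀ i)) ≤ ∑ i, pnorm p (Dᵀ.mulVec (C'ᵀ i))

/-- Optimal point of `min_C ∑ᵢ ‖Dᵀ cᵢ‖₂  s.t.  cᵢᵀ dᵢ = 1`. -/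
def IsOptimal2 {a ι : Type*} [Fintype a] [Fintype ι] (D C : Matrix a ι ℝ) : Prop :=
  Feasible D C ∧ ∀ C' : Matrix a ι ℝ, Feasible D C' →
    ∑ i, enorm (Dᵀ.mulVec (Cᵀ i)) ≤ ∑ i, enorm (Dᵀ.mulVec (C'ᵀ i))

/-- The adjacency matrix `A = |Dᵀ C|`. -/
def adjacency {a ι : Type*} [Fintype a] [Fintype ι] (D C : Matrix a ι ℝ) : Matrix ι ι ℝ :=
  Matrix.of fun j i => |(Dᵀ * C) j i|

/-- `Δ_min`: the permeance statistic of the clusters. -/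
def Dmin {M₁ m n s rs : ℕ} (D : Matrix (Fin M₁) (Fin m × Fin n) ℝ)
    (Smat : Matrix (Fin M₁) (Fin s) ℝ) (Ud : Fin m → Matrix (Fin M₁) (Fin rs) ℝ)
    (p : ℝ) : ℝ :=
  ⨅ j : Fin m, ⨅ u : { u : Fin M₁ → ℝ // u ∈ colSpan Smat ⊔ colSpan (Ud j) ∧ enorm u = 1 },
    ∑ t : Fin n, |dotProduct u.1 (Dᵀ (j, t))| ^ p

/-- `Δ̇_max`. -/
def Ddotmax {M₁ m n rs : ℕ} (D : Matrix (Fin M₁) (Fin m × Fin n) ℝ)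
    (Ud : Fin m → Matrix (Fin M₁) (Fin rs) ℝ) (p : ℝ) : ℝ :=
  ⨆ j : Fin m, ⨆ u : { u : Fin rs → ℝ // enorm u = 1 },
    ∑ t : Fin n, |dotProduct u.1 ((Ud j)ᵀ.mulVec (Dᵀ (j, t)))| ^ p

/-- `Δ̄_max`. -/
def Dbarmax {M₁ m n s : ℕ} (D : Matrix (Fin M₁) (Fin m × Fin n) ℝ)
    (Smat : Matrix (Fin M₁) (Fin s) ℝ) (p : ℝ) : ℝ :=
  ⨆ j : Fin m, ⨆ u : { u : Fin s → ℝ // enorm u = 1 },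
    ∑ t : Fin n, |dotProduct u.1 (Smatᵀ.mulVec (Dᵀ (j, t)))| ^ p

/-- `φ = max_{j ≠ t} ‖U̇ₜᵀ U̇ⱼ‖`. -/
def phi {M₁ m rs : ℕ} (Ud : Fin m → Matrix (Fin M₁) (Fin rs) ℝ) : ℝ :=
  ⨆ j : Fin m, ⨆ t : Fin m, if j ≠ t then spec ((Ud t)ᵀ * Ud j) else 0

/-- `z_{δ,x}`. -/
def zd (m n : ℕ) (δ x : ℝ) : ℝ :=
  1 + 2 * Real.sqrt (1 / x * Real.log (2 * n * m / δ)) + 2 / x * Real.log (2 * n * m / δ)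

/-- `η_{δ,x}`. -/
def etad (m n : ℕ) (δ x : ℝ) : ℝ :=
  max (4 * zd m n δ x / 3 * Real.log (2 * x * m / δ))
    (Real.sqrt (4 * n * (x + 3) / x ^ 2 * Real.log (2 * x * m / δ)))

/-- `σ_l(x/y, δ)`. -/
def sigl (M₂ : ℕ) (δ x y : ℝ) : ℝ :=
  (x - 2 * Real.sqrt (x * Real.log (2 * M₂ / δ))) /
    (y + 2 * Real.sqrt ((y - x) * Real.log (2 * M₂ / δ)) + 2 * Real.log (2 * M₂ / δ)
      - 2 * Real.sqrt (x * Real.log (2 * M₂ / δ)))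

/-- `σ_u(x/y, δ)`. -/
def sigu (M₂ : ℕ) (δ x y : ℝ) : ℝ :=
  (x + 2 * Real.sqrt (x * Real.log (2 * M₂ / δ)) + 2 * Real.log (2 * M₂ / δ)) /
    (y + 2 * Real.sqrt (x * Real.log (2 * M₂ / δ)) + 2 * Real.log (2 * M₂ / δ)
      - 2 * Real.sqrt ((y - x) * Real.log (2 * M₂ / δ)))

/-- `c_δ` of Theorems 3 and 8. -/
def cdel (M₁ m r s : ℕ) (δ : ℝ) : ℝ :=
  3 * max 1 (max (Real.sqrt (8 * M₁ * Real.pi / (((M₁ : ℝ) - 1) * ((r : ℝ) - s))))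
    (Real.sqrt (16 * M₁ * Real.log (m * r / δ) / (((M₁ : ℝ) - 1) * ((r : ℝ) - s)))))


private lemma enorm_sq' {ι : Type*} [Fintype ι] (v : ι → ℝ) :
    enorm v ^ 2 = dotProduct v v := by
  have : dotProduct v v = ∑ i, v i ^ 2 := by simp [dotProduct, sq]
  rw [this, enorm, Real.sq_sqrt]
  positivity

private lemma enorm_nonneg' {ι : Type*} [Fintype ι] (v : ι → ℝ) : 0 ≤ enorm v :=
  Real.sqrt_nonneg _

private lemma enorm_eq_zero_iff' {ι : Type*} [Fintype ι] {v : ι → ℝ} : enorm v = 0 ↔ v = 0 := by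
  constructor
  · intro h
    have h2 : ∑ i, v i ^ 2 = 0 := by
      have := congrArg (· ^ 2) h
      simpa [enorm, Real.sq_sqrt (by positivity : (0:ℝ) ≤ ∑ i, v i ^ 2)] using this
    funext j
    have := (Finset.sum_eq_zero_iff_of_nonneg (fun i _ => sq_nonneg (v i))).1 h2 j (by simp)
    exact pow_eq_zero_iff (n := 2) (by norm_num) |>.1 this
  · rintro rfl; simp [enorm]

private lemma enorm_smul' {ι : Type*} [Fintype ι] (a : ℝ) (v : ι → ℝ) :
    enorm (a • v) = |a| * enorm v := by
  simp only [enorm, Pi.smul_apply, smul_eq_mul, mul_pow]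
  rw [← Finset.mul_sum, Real.sqrt_mul (sq_nonneg a), Real.sqrt_sq_eq_abs]

private lemma adjoint_dot {a b : Type*} [Fintype a] [Fintype b] (M : Matrix a b ℝ)
    (w : b → ℝ) (x : a → ℝ) : dotProduct (M.mulVec w) x = dotProduct w (Mᵀ.mulVec x) := by
  rw [dotProduct_comm, dotProduct_mulVec, ← mulVec_transpose, dotProduct_comm]

private lemma isometry_dot {a b : Type*} [Fintype a] [Fintype b] [DecidableEq b]
    {M : Matrix a b ℝ} (hM : Mᵀ * M = 1) (v : b → ℝ) : enorm (M.mulVec v) = enorm v := by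
  have h : dotProduct (M.mulVec v) (M.mulVec v) = dotProduct v v := by
    rw [adjoint_dot, mulVec_mulVec, hM, one_mulVec]
  have h1 := enorm_sq' (M.mulVec v)
  have h2 := enorm_sq' v
  nlinarith [enorm_nonneg' (M.mulVec v), enorm_nonneg' v]

private lemma contraction_dot {a b : Type*} [Fintype a] [Fintype b] [DecidableEq b]
    {M : Matrix a b ℝ} (hM : Mᵀ * M = 1) (x : a → ℝ) : enorm (Mᵀ.mulVec x) ≤ enorm x := by
  set q := M.mulVec (Mᵀ.mulVec x) with hq
  have hMq : Mᵀ.mulVec q = Mᵀ.mulVec x := by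
    rw [hq, mulVec_mulVec, ← mulVec_mulVec, mulVec_mulVec, hM, one_mulVec]
  have h1 : dotProduct q x = dotProduct (Mᵀ.mulVec x) (Mᵀ.mulVec x) := by
    rw [hq, adjoint_dot]
  have h2 : dotProduct q q = dotProduct (Mᵀ.mulVec x) (Mᵀ.mulVec x) := by
    rw [hq, adjoint_dot, hMq]
  have h3 : 0 ≤ dotProduct (x - q) (x - q) := by
    apply Finset.sum_nonneg; intro i _; exact mul_self_nonneg _
  have h4 : dotProduct (x - q) (x - q)
      = dotProduct x x - dotProduct x q - dotProduct q x + dotProduct q q := by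
    rw [sub_dotProduct, dotProduct_sub, dotProduct_sub]; ring
  have h5 : dotProduct x q = dotProduct q x := dotProduct_comm _ _
  have key : dotProduct (Mᵀ.mulVec x) (Mᵀ.mulVec x) ≤ dotProduct x x := by linarith
  have e1 := enorm_sq' (Mᵀ.mulVec x)
  have e2 := enorm_sq' x
  nlinarith [enorm_nonneg' (Mᵀ.mulVec x), enorm_nonneg' x]

private lemma abs_dot_le {ι : Type*} [Fintype ι] (u z : ι → ℝ) :
    |dotProduct u z| ≤ enorm u * enorm z := by
  have hcs : (dotProduct u z) ^ 2 ≤ (∑ i, u i ^ 2) * ∑ i, z i ^ 2 := by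
    simpa [dotProduct] using sum_mul_sq_le_sq_mul_sq (Finset.univ) u z
  have h1 : (dotProduct u z) ^ 2 ≤ (enorm u * enorm z) ^ 2 := by
    rw [mul_pow, enorm_sq', enorm_sq']
    simpa [dotProduct, sq] using hcs
  calc |dotProduct u z| = Real.sqrt ((dotProduct u z) ^ 2) := (Real.sqrt_sq_eq_abs _).symm
    _ ≤ Real.sqrt ((enorm u * enorm z) ^ 2) := Real.sqrt_le_sqrt h1
    _ = enorm u * enorm z := by
        rw [Real.sqrt_sq (mul_nonneg (enorm_nonneg' u) (enorm_nonneg' z))]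

private lemma mul_eq_zero_of_forall_col {a b c : Type*} [Fintype a] [Fintype b] [Fintype c]
    (M : Matrix a b ℝ) (N : Matrix b c ℝ) (h : ∀ j, M.mulVec (Nᵀ j) = 0) : M * N = 0 := by
  ext x y
  have := congrFun (h y) x
  simpa [Matrix.mul_apply, Matrix.mulVec, dotProduct] using this


/-- properties of the direction `d⃗ᵢ = U⃗_{kᵢ}U⃗_{kᵢ}ᵀ dᵢ / ‖U⃗_{kᵢ}ᵀU̇_{kᵢ}βᵢ‖₂²`
under the innovation assumption. -/
theorem statement13 (M₁ m n r s : ℕ) (hm : 1 < m) (hn : 0 < n) (hsr : s ≤ r)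
    (D : Matrix (Fin M₁) (Fin m × Fin n) ℝ)
    (Smat : Matrix (Fin M₁) (Fin s) ℝ)
    (Ud : Fin m → Matrix (Fin M₁) (Fin (r - s)) ℝ)
    (α : Fin m × Fin n → Fin s → ℝ) (β : Fin m × Fin n → Fin (r - s) → ℝ)
    (hSo : Smatᵀ * Smat = 1)
    (hUo : ∀ j, (Ud j)ᵀ * Ud j = 1)
    (hSU : ∀ j, Smatᵀ * Ud j = 0)
    (hnsub : ∀ i j : Fin m, i ≠ j →
      ¬ (colSpan Smat ⊔ colSpan (Ud i) ≤ colSpan Smat ⊔ colSpan (Ud j)))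
    (hcap : ∀ i j : Fin m, i ≠ j →
      (colSpan Smat ⊔ colSpan (Ud i)) ⊓ (colSpan Smat ⊔ colSpan (Ud j)) = colSpan Smat)
    (hcol : ∀ i : Fin m × Fin n, Dᵀ i = Smat.mulVec (α i) + (Ud i.1).mulVec (β i))
    (dP : Fin m → ℕ)
    (P : (i : Fin m) → Matrix (Fin M₁) (Fin (dP i)) ℝ)
    (hPo : ∀ i, (P i)ᵀ * P i = 1)
    (hPspan : ∀ i, colSpan (P i) =
      ⨆ j : { j : Fin m // j ≠ i }, (colSpan Smat ⊔ colSpan (Ud j.1)))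
    (hA3 : ∀ i, colSpan (Ud i) ⊓ colSpan (P i) = ⊥)
    (Uv : Fin m → Matrix (Fin M₁) (Fin (r - s)) ℝ)
    (hUvo : ∀ i, (Uv i)ᵀ * Uv i = 1)
    (hUvspan : ∀ i, colSpan (Uv i) =
      Submodule.map (Matrix.mulVecLin (1 - P i * (P i)ᵀ)) (colSpan Smat ⊔ colSpan (Ud i)))
    (i : Fin m × Fin n)
    (hne : ((Uv i.1)ᵀ * Ud i.1).mulVec (β i) ≠ 0) :
    dotProduct ((enorm (((Uv i.1)ᵀ * Ud i.1).mulVec (β i)) ^ 2)⁻¹ •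
        (Uv i.1 * (Uv i.1)ᵀ).mulVec (Dᵀ i)) (Dᵀ i) = 1 ∧
    (∀ j : Fin m × Fin n, j.1 ≠ i.1 →
      dotProduct (Dᵀ j) ((enorm (((Uv i.1)ᵀ * Ud i.1).mulVec (β i)) ^ 2)⁻¹ •
        (Uv i.1 * (Uv i.1)ᵀ).mulVec (Dᵀ i)) = 0) ∧
    ∀ p : ℝ, 1 ≤ p →
      ∑ t : Fin n, |dotProduct (Dᵀ (i.1, t))
          ((enorm (((Uv i.1)ᵀ * Ud i.1).mulVec (β i)) ^ 2)⁻¹ •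
            (Uv i.1 * (Uv i.1)ᵀ).mulVec (Dᵀ i))| ^ p
        ≤ Ddotmax D Ud p / enorm (((Uv i.1)ᵀ * Ud i.1).mulVec (β i)) ^ p := by
  classical
  set k := i.1 with hk
  set v : Fin (r - s) → ℝ := ((Uv k)ᵀ * Ud k).mulVec (β i) with hv
  -- orthogonality of Uv k and P k
  have hPker : (P k)ᵀ * (1 - P k * (P k)ᵀ) = 0 := by
    rw [Matrix.mul_sub, Matrix.mul_one, ← Matrix.mul_assoc, hPo, Matrix.one_mul, sub_self]
  have hPUv : (P k)ᵀ * Uv k = 0 := by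
    apply mul_eq_zero_of_forall_col
    intro j
    have hmem : (Uv k)ᵀ j ∈ colSpan (Uv k) := Submodule.subset_span ⟨j, rfl⟩
    rw [hUvspan k] at hmem
    obtain ⟨y, -, hy⟩ := hmem
    rw [← hy]
    simp only [Matrix.mulVecLin_apply]
    rw [Matrix.mulVec_mulVec, hPker, Matrix.zero_mulVec]
  have hUvP : (Uv k)ᵀ * P k = 0 := by
    have := congrArg Matrix.transpose hPUv
    simpa [Matrix.transpose_mul] using this
  have hUvX : ∀ x ∈ colSpan (P k), (Uv k)ᵀ.mulVec x = 0 := by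
    intro x hx
    rw [colSpan] at hx
    change x ∈ Submodule.span ℝ (Set.range (P k).col) at hx
    rw [← Matrix.range_mulVecLin] at hx
    obtain ⟨z, hz⟩ := hx
    rw [← hz]
    simp only [Matrix.mulVecLin_apply]
    rw [Matrix.mulVec_mulVec, hUvP, Matrix.zero_mulVec]
  have hScol : colSpan Smat ≤ colSpan (P k) := by
    obtain ⟨j, hj⟩ := Fintype.exists_ne_of_one_lt_card (by simpa using hm) k
    calc colSpan Smat ≤ colSpan Smat ⊔ colSpan (Ud j) := le_sup_left
      _ ≤ ⨆ j' : {j' : Fin m // j' ≠ k}, (colSpan Smat ⊔ colSpan (Ud j'.1)) :=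
          le_iSup (fun j' : {j' : Fin m // j' ≠ k} =>
            colSpan Smat ⊔ colSpan (Ud j'.1)) ⟨j, hj⟩
      _ = colSpan (P k) := (hPspan k).symm
  have hUdcol : ∀ j : Fin m, j ≠ k → colSpan (Ud j) ≤ colSpan (P k) := by
    intro j hj
    calc colSpan (Ud j) ≤ colSpan Smat ⊔ colSpan (Ud j) := le_sup_right
      _ ≤ ⨆ j' : {j' : Fin m // j' ≠ k}, (colSpan Smat ⊔ colSpan (Ud j'.1)) :=
          le_iSup (fun j' : {j' : Fin m // j' ≠ k} =>
            colSpan Smat ⊔ colSpan (Ud j'.1)) ⟨j, hj⟩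
      _ = colSpan (P k) := (hPspan k).symm
  have hmemcol : ∀ {a : Type} [Fintype a] (M : Matrix (Fin M₁) a ℝ) (z : a → ℝ),
      M.mulVec z ∈ colSpan M := by
    intro a _ M z
    rw [colSpan]
    change M.mulVec z ∈ Submodule.span ℝ (Set.range M.col)
    rw [← Matrix.range_mulVecLin]
    exact ⟨z, Matrix.mulVecLin_apply M z⟩
  have hUvS : ∀ a, (Uv k)ᵀ.mulVec (Smat.mulVec a) = 0 := fun a =>
    hUvX _ (hScol (hmemcol Smat a))
  have hUvUd : ∀ j : Fin m, j ≠ k → ∀ b, (Uv k)ᵀ.mulVec ((Ud j).mulVec b) = 0 := fun j hj b =>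
    hUvX _ (hUdcol j hj (hmemcol (Ud j) b))
  have hUvd : ∀ j : Fin m × Fin n, j.1 = k →
      (Uv k)ᵀ.mulVec (Dᵀ j) = ((Uv k)ᵀ * Ud k).mulVec (β j) := by
    intro j hj
    rw [hcol j, Matrix.mulVec_add, hUvS, zero_add, hj, Matrix.mulVec_mulVec]
  -- main dot product identity
  have hdot : ∀ x : Fin M₁ → ℝ,
      dotProduct x ((Uv k * (Uv k)ᵀ).mulVec (Dᵀ i)) = dotProduct ((Uv k)ᵀ.mulVec x) v := by
    intro x
    calc dotProduct x ((Uv k * (Uv k)ᵀ).mulVec (Dᵀ i))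
        = dotProduct x ((Uv k).mulVec ((Uv k)ᵀ.mulVec (Dᵀ i))) := by
          rw [Matrix.mulVec_mulVec]
      _ = dotProduct ((Uv k).mulVec ((Uv k)ᵀ.mulVec (Dᵀ i))) x := dotProduct_comm _ _
      _ = dotProduct ((Uv k)ᵀ.mulVec (Dᵀ i)) ((Uv k)ᵀ.mulVec x) := adjoint_dot _ _ _
      _ = dotProduct v ((Uv k)ᵀ.mulVec x) := by rw [hUvd i rfl]
      _ = dotProduct ((Uv k)ᵀ.mulVec x) v := dotProduct_comm _ _
  have hvne : v ≠ 0 := hne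
  have hepos : 0 < enorm v :=
    lt_of_le_of_ne (enorm_nonneg' v) (fun h => hvne (enorm_eq_zero_iff'.1 h.symm))
  refine ⟨?_, ?_, ?_⟩
  · -- part (a)
    rw [smul_dotProduct, smul_eq_mul, dotProduct_comm, hdot (Dᵀ i), hUvd i rfl, ← hv,
      ← enorm_sq']
    exact inv_mul_cancel₀ (pow_ne_zero 2 hepos.ne')
  · -- part (b)
    intro j hj
    rw [dotProduct_smul, smul_eq_mul, hdot (Dᵀ j)]
    have hz : (Uv k)ᵀ.mulVec (Dᵀ j) = 0 := by
      rw [hcol j, Matrix.mulVec_add, hUvS, zero_add, hUvUd j.1 hj]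
    rw [hz, zero_dotProduct, mul_zero]
  · -- part (c)
    intro p hp
    have hp0 : (0:ℝ) < p := lt_of_lt_of_le zero_lt_one hp
    set w : Fin (r - s) → ℝ := ((Ud k)ᵀ * Uv k).mulVec v with hw
    -- entries of D_{k}ᵀ d⃗
    have hentry : ∀ t : Fin n,
        dotProduct (Dᵀ (k, t)) ((enorm v ^ 2)⁻¹ •
          (Uv k * (Uv k)ᵀ).mulVec (Dᵀ i))
        = (enorm v ^ 2)⁻¹ * dotProduct w (β (k, t)) := by
      intro t
      rw [dotProduct_smul, smul_eq_mul, hdot (Dᵀ (k, t)), hUvd (k, t) rfl]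
      congr 1
      calc dotProduct (((Uv k)ᵀ * Ud k).mulVec (β (k, t))) v
          = dotProduct (β (k, t)) (((Uv k)ᵀ * Ud k)ᵀ.mulVec v) := adjoint_dot _ _ _
        _ = dotProduct (β (k, t)) w := by
            rw [Matrix.transpose_mul, Matrix.transpose_transpose, hw]
        _ = dotProduct w (β (k, t)) := dotProduct_comm _ _
    have hUdD : ∀ t : Fin n, (Ud k)ᵀ.mulVec (Dᵀ (k, t)) = β (k, t) := by
      intro t
      have hUS : (Ud k)ᵀ * Smat = 0 := by
        have := congrArg Matrix.transpose (hSU k)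
        simpa [Matrix.transpose_mul] using this
      rw [hcol (k, t), Matrix.mulVec_add, Matrix.mulVec_mulVec, Matrix.mulVec_mulVec, hUS,
        Matrix.zero_mulVec, zero_add, hUo, Matrix.one_mulVec]
    -- nonemptiness
    have hne' : Nonempty (Fin (r - s)) := by
      rcases isEmpty_or_nonempty (Fin (r - s)) with h | h
      · exact absurd (funext fun a => h.elim a) hvne
      · exact h
    obtain ⟨a₀⟩ := hne'
    have hu₀ : enorm (fun x : Fin (r - s) => if x = a₀ then (1:ℝ) else 0) = 1 := by
      have hsum1 : (∑ x : Fin (r - s), (if x = a₀ then (1:ℝ) else 0) ^ 2) = 1 := by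
        simp
      rw [enorm, hsum1, Real.sqrt_one]
    haveI hnsph : Nonempty {u : Fin (r - s) → ℝ // enorm u = 1} := ⟨⟨_, hu₀⟩⟩
    -- upper bound for Ddotmax terms
    have hub : ∀ (j : Fin m) (u : Fin (r - s) → ℝ), enorm u = 1 →
        (∑ t : Fin n, |dotProduct u ((Ud j)ᵀ.mulVec (Dᵀ (j, t)))| ^ p)
          ≤ ∑ j' : Fin m, ∑ t : Fin n, enorm ((Ud j')ᵀ.mulVec (Dᵀ (j', t))) ^ p := by
      intro j u hu
      have h1 : (∑ t : Fin n, |dotProduct u ((Ud j)ᵀ.mulVec (Dᵀ (j, t)))| ^ p)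
          ≤ ∑ t : Fin n, enorm ((Ud j)ᵀ.mulVec (Dᵀ (j, t))) ^ p := by
        apply Finset.sum_le_sum
        intro t _
        apply Real.rpow_le_rpow (abs_nonneg _) _ hp0.le
        calc |dotProduct u ((Ud j)ᵀ.mulVec (Dᵀ (j, t)))|
            ≤ enorm u * enorm ((Ud j)ᵀ.mulVec (Dᵀ (j, t))) := abs_dot_le _ _
          _ = enorm ((Ud j)ᵀ.mulVec (Dᵀ (j, t))) := by rw [hu, one_mul]
      refine h1.trans ?_
      exact Finset.single_le_sum
        (f := fun j' => ∑ t : Fin n, enorm ((Ud j')ᵀ.mulVec (Dᵀ (j', t))) ^ p)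
        (fun j' _ => Finset.sum_nonneg fun t _ => Real.rpow_nonneg (enorm_nonneg' _) p)
        (Finset.mem_univ j)
    have hDdle : ∀ u : Fin (r - s) → ℝ, enorm u = 1 →
        (∑ t : Fin n, |dotProduct u ((Ud k)ᵀ.mulVec (Dᵀ (k, t)))| ^ p) ≤ Ddotmax D Ud p := by
      intro u hu
      have hbddi : ∀ j : Fin m, BddAbove (Set.range fun u' : {u : Fin (r - s) → ℝ // enorm u = 1}
          => ∑ t : Fin n, |dotProduct u'.1 ((Ud j)ᵀ.mulVec (Dᵀ (j, t)))| ^ p) := by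
        intro j
        exact ⟨_, by rintro x ⟨u', rfl⟩; exact hub j u'.1 u'.2⟩
      have step1 : (∑ t : Fin n, |dotProduct u ((Ud k)ᵀ.mulVec (Dᵀ (k, t)))| ^ p)
          ≤ ⨆ u' : {u : Fin (r - s) → ℝ // enorm u = 1},
              ∑ t : Fin n, |dotProduct u'.1 ((Ud k)ᵀ.mulVec (Dᵀ (k, t)))| ^ p :=
        le_ciSup (hbddi k) ⟨u, hu⟩
      refine step1.trans ?_
      show _ ≤ ⨆ j : Fin m, ⨆ u' : {u : Fin (r - s) → ℝ // enorm u = 1},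
          ∑ t : Fin n, |dotProduct u'.1 ((Ud j)ᵀ.mulVec (Dᵀ (j, t)))| ^ p
      apply le_ciSup (f := fun j : Fin m => ⨆ u' : {u : Fin (r - s) → ℝ // enorm u = 1},
          ∑ t : Fin n, |dotProduct u'.1 ((Ud j)ᵀ.mulVec (Dᵀ (j, t)))| ^ p) _ k
      refine ⟨∑ j' : Fin m, ∑ t : Fin n, enorm ((Ud j')ᵀ.mulVec (Dᵀ (j', t))) ^ p, ?_⟩
      rintro x ⟨j, rfl⟩
      exact ciSup_le fun u' => hub j u'.1 u'.2
    have hDd0 : 0 ≤ Ddotmax D Ud p := by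
      refine le_trans ?_ (hDdle _ hu₀)
      exact Finset.sum_nonneg fun t _ => Real.rpow_nonneg (abs_nonneg _) p
    by_cases hw0 : w = 0
    · have hz : ∀ t : Fin n, |dotProduct (Dᵀ (k, t)) ((enorm v ^ 2)⁻¹ •
          (Uv k * (Uv k)ᵀ).mulVec (Dᵀ i))| ^ p = 0 := by
        intro t
        rw [hentry t, hw0, zero_dotProduct, mul_zero, abs_zero, Real.zero_rpow hp0.ne']
      rw [Finset.sum_congr rfl fun t _ => hz t, Finset.sum_const_zero]
      exact div_nonneg hDd0 (Real.rpow_nonneg hepos.le p)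
    · have hewpos : 0 < enorm w :=
        lt_of_le_of_ne (enorm_nonneg' w) (fun h => hw0 (enorm_eq_zero_iff'.1 h.symm))
      set u : Fin (r - s) → ℝ := (enorm w)⁻¹ • w with hu'
      have hu : enorm u = 1 := by
        rw [hu', enorm_smul', abs_inv, abs_of_pos hewpos, inv_mul_cancel₀ hewpos.ne']
      have hwu : w = enorm w • u := by
        rw [hu', smul_smul, mul_inv_cancel₀ hewpos.ne', one_smul]
      have hsum : ∀ t : Fin n, |dotProduct (Dᵀ (k, t)) ((enorm v ^ 2)⁻¹ •
            (Uv k * (Uv k)ᵀ).mulVec (Dᵀ i))| ^ p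
          = ((enorm v ^ 2)⁻¹ * enorm w) ^ p * |dotProduct u (β (k, t))| ^ p := by
        intro t
        rw [hentry t]
        conv_lhs => rw [hwu]
        rw [smul_dotProduct, smul_eq_mul, ← mul_assoc, abs_mul,
          Real.mul_rpow (abs_nonneg _) (abs_nonneg _),
          abs_of_nonneg (mul_nonneg (inv_nonneg.2 (sq_nonneg _)) hewpos.le)]
      rw [Finset.sum_congr rfl fun t _ => hsum t, ← Finset.mul_sum]
      have hC0 : 0 ≤ (enorm v ^ 2)⁻¹ * enorm w :=
        mul_nonneg (inv_nonneg.2 (sq_nonneg _)) hewpos.le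
      have hsum2 : (∑ t : Fin n, |dotProduct u (β (k, t))| ^ p) ≤ Ddotmax D Ud p := by
        refine le_trans (le_of_eq ?_) (hDdle u hu)
        exact Finset.sum_congr rfl fun t _ => by rw [hUdD t]
      have hstep : ((enorm v ^ 2)⁻¹ * enorm w) ^ p *
            (∑ t : Fin n, |dotProduct u (β (k, t))| ^ p)
          ≤ ((enorm v ^ 2)⁻¹ * enorm w) ^ p * Ddotmax D Ud p :=
        mul_le_mul_of_nonneg_left hsum2 (Real.rpow_nonneg hC0 p)
      refine hstep.trans ?_
      -- ‖w‖ ≤ ‖v‖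
      have hewle : enorm w ≤ enorm v := by
        have h1 : w = (Ud k)ᵀ.mulVec ((Uv k).mulVec v) := by
          rw [hw, ← Matrix.mulVec_mulVec]
        calc enorm w = enorm ((Ud k)ᵀ.mulVec ((Uv k).mulVec v)) := by rw [← h1]
          _ ≤ enorm ((Uv k).mulVec v) := contraction_dot (hUo k) _
          _ = enorm v := isometry_dot (hUvo k) v
      have hC : (enorm v ^ 2)⁻¹ * enorm w ≤ (enorm v)⁻¹ := by
        have h1 : (enorm v ^ 2)⁻¹ * enorm w ≤ (enorm v ^ 2)⁻¹ * enorm v :=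
          mul_le_mul_of_nonneg_left hewle (inv_nonneg.2 (sq_nonneg _))
        refine h1.trans (le_of_eq ?_)
        rw [sq]
        field_simp
      have h2 : ((enorm v ^ 2)⁻¹ * enorm w) ^ p ≤ ((enorm v)⁻¹) ^ p :=
        Real.rpow_le_rpow hC0 hC hp0.le
      calc ((enorm v ^ 2)⁻¹ * enorm w) ^ p * Ddotmax D Ud p
          ≤ ((enorm v)⁻¹) ^ p * Ddotmax D Ud p := mul_le_mul_of_nonneg_right h2 hDd0
        _ = Ddotmax D Ud p / enorm v ^ p := by
            rw [Real.inv_rpow hepos.le, div_eq_mul_inv, mul_comm]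


end Paper
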